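/- With f_i the per-sample quadratic losses and F = (1/m)Σᵢ fᵢ their average, suppose each f_i satisfies, on a subspace Γ containing X, Y of matrices of rank at most s, the bound ‖P_Γ(∇f_i(X) − ∇f_i(Y))‖_F² ≤ 2(1+δ_s)⟨X − Y, ∇f_i(X) − ∇f_i(Y)⟩, and F satisfies ⟨X − Y, ∇F(X) − ∇F(Y)⟩ ≥ 2(1 − δ_s)‖X − Y‖_F². If i is chosen uniformly at random from {1,…,m} and 0 < η ≤ 1/(1+δ_s), then E_i ‖X − Y − η P_Γ(∇f_i(X) − ∇f_i(Y))‖_F ≤ √(1 − 2(1 − δ_s)(2η − 2η²(1+δ_s))) · ‖X − Y‖_F. -/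
import Mathlib

noncomputable section

open Finset

/-- Frobenius inner product on real matrices. -/
def finner {n₁ n₂ : ℕ} (X Y : Matrix (Fin n₁) (Fin n₂) ℝ) : ℝ :=
  ∑ i, ∑ j, X i j * Y i j

/-- Frobenius norm on real matrices. -/
def fnorm {n₁ n₂ : ℕ} (X : Matrix (Fin n₁) (Fin n₂) ℝ) : ℝ :=
  Real.sqrt (finner X X)

namespace ForStmt5

variable {n₁ n₂ : ℕ}

lemma finner_comm (A B : Matrix (Fin n₁) (Fin n₂) ℝ) : finner A B = finner B A := by
  simp [finner, mul_comm]

lemma finner_self_nonneg (A : Matrix (Fin n₁) (Fin n₂) ℝ) : 0 ≤ finner A A :=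
  Finset.sum_nonneg fun i _ => Finset.sum_nonneg fun j _ => mul_self_nonneg _

lemma fnorm_sq (A : Matrix (Fin n₁) (Fin n₂) ℝ) : fnorm A ^ 2 = finner A A :=
  Real.sq_sqrt (finner_self_nonneg A)

lemma finner_smul_right (c : ℝ) (A B : Matrix (Fin n₁) (Fin n₂) ℝ) :
    finner A (c • B) = c * finner A B := by
  simp [finner, Finset.mul_sum, mul_left_comm]

lemma finner_sum_right {ι : Type*} (A : Matrix (Fin n₁) (Fin n₂) ℝ) (s : Finset ι)
    (W : ι → Matrix (Fin n₁) (Fin n₂) ℝ) :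
    finner A (∑ i ∈ s, W i) = ∑ i ∈ s, finner A (W i) := by
  simp only [finner, Matrix.sum_apply, Finset.mul_sum]
  have h : ∀ i : Fin n₁, ∑ j, ∑ k ∈ s, A i j * W k i j
      = ∑ k ∈ s, ∑ j, A i j * W k i j := fun i => Finset.sum_comm
  simp_rw [h]
  exact Finset.sum_comm

lemma expand (A B : Matrix (Fin n₁) (Fin n₂) ℝ) (c : ℝ) :
    finner (A - c • B) (A - c • B)
      = finner A A - 2 * c * finner A B + c ^ 2 * finner B B := by
  have h : ∀ i j, (A i j - (c • B) i j) * (A i j - (c • B) i j)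
      = A i j * A i j - 2 * c * (A i j * B i j) + c ^ 2 * (B i j * B i j) := by
    intro i j; simp only [Matrix.smul_apply, smul_eq_mul]; ring
  simp only [finner, Matrix.sub_apply, h, Finset.sum_add_distrib,
    Finset.sum_sub_distrib, ← Finset.mul_sum]

end ForStmt5

open ForStmt5 in
theorem stmt_5 {n₁ n₂ m s : ℕ} (hm : 0 < m) (δ η : ℝ) (hδ0 : 0 ≤ δ) (hδ1 : δ < 1)
    (hη0 : 0 < η) (hη1 : η ≤ 1 / (1 + δ))
    (Γ : Submodule ℝ (Matrix (Fin n₁) (Fin n₂) ℝ))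
    (hrank : ∀ Z ∈ Γ, Matrix.rank Z ≤ s)
    (X Y : Matrix (Fin n₁) (Fin n₂) ℝ) (hX : X ∈ Γ) (hY : Y ∈ Γ)
    (P : Matrix (Fin n₁) (Fin n₂) ℝ →ₗ[ℝ] Matrix (Fin n₁) (Fin n₂) ℝ)
    (hPmem : ∀ Z, P Z ∈ Γ) (hPid : ∀ Z ∈ Γ, P Z = Z)
    (hPsa : ∀ Z W, finner (P Z) W = finner Z (P W))
    (g : Fin m → Matrix (Fin n₁) (Fin n₂) ℝ → Matrix (Fin n₁) (Fin n₂) ℝ)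
    (G : Matrix (Fin n₁) (Fin n₂) ℝ → Matrix (Fin n₁) (Fin n₂) ℝ)
    (hG : ∀ Z, G Z = (1 / (m : ℝ)) • ∑ i, g i Z)
    (hsmooth : ∀ i, fnorm (P (g i X - g i Y)) ^ 2 ≤
      2 * (1 + δ) * finner (X - Y) (g i X - g i Y))
    (hcoerc : finner (X - Y) (G X - G Y) ≥ 2 * (1 - δ) * fnorm (X - Y) ^ 2) :
    (1 / (m : ℝ)) * ∑ i, fnorm (X - Y - η • P (g i X - g i Y)) ≤
      Real.sqrt (1 - 2 * (1 - δ) * (2 * η - 2 * η ^ 2 * (1 + δ))) * fnorm (X - Y) := by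
  have hmR : (0 : ℝ) < m := by exact_mod_cast hm
  set D := X - Y with hDdef
  set w : Fin m → Matrix (Fin n₁) (Fin n₂) ℝ := fun i => g i X - g i Y with hwdef
  have hD : D ∈ Γ := Γ.sub_mem hX hY
  have hPD : P D = D := hPid D hD
  -- inner product with projected vectors
  have hproj : ∀ i, finner D (P (w i)) = finner D (w i) := by
    intro i
    rw [finner_comm, hPsa, hPD, finner_comm]
  -- sum identity for G
  have hGsum : finner D (G X - G Y) = (1 / (m : ℝ)) * ∑ i, finner D (w i) := by
    rw [hG, hG, ← smul_sub, ← Finset.sum_sub_distrib, finner_smul_right,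
      finner_sum_right]
  have h1δ : (0 : ℝ) < 1 + δ := by linarith
  have hη1' : η * (1 + δ) ≤ 1 := by
    rw [le_div_iff₀ h1δ] at hη1; linarith
  have ht : 0 ≤ 2 * η - 2 * η ^ 2 * (1 + δ) := by nlinarith
  -- per-sample bound on the squared norm
  have hper : ∀ i, fnorm (D - η • P (w i)) ^ 2 ≤
      finner D D - (2 * η - 2 * η ^ 2 * (1 + δ)) * finner D (w i) := by
    intro i
    rw [fnorm_sq, expand, hproj]
    have hs := hsmooth i
    rw [fnorm_sq] at hs
    nlinarith [sq_nonneg η, mul_le_mul_of_nonneg_left hs (sq_nonneg η)]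
  -- sum of squared norms
  have hsumw : (2 * (1 - δ)) * finner D D * (m : ℝ) ≤ ∑ i, finner D (w i) := by
    have h := hcoerc
    rw [hGsum, fnorm_sq] at h
    have h2 : (m : ℝ) * (2 * (1 - δ) * finner D D)
        ≤ (m : ℝ) * ((1 / (m : ℝ)) * ∑ i, finner D (w i)) :=
      mul_le_mul_of_nonneg_left h hmR.le
    have h3 : (m : ℝ) * ((1 / (m : ℝ)) * ∑ i, finner D (w i)) = ∑ i, finner D (w i) := by
      field_simp
    rw [h3] at h2
    linarith
  have hQ : ∑ i, fnorm (D - η • P (w i)) ^ 2 ≤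
      (m : ℝ) * ((1 - 2 * (1 - δ) * (2 * η - 2 * η ^ 2 * (1 + δ))) * finner D D) := by
    calc ∑ i, fnorm (D - η • P (w i)) ^ 2
        ≤ ∑ _i : Fin m, (finner D D - (2 * η - 2 * η ^ 2 * (1 + δ)) *
            finner D (w _i)) := Finset.sum_le_sum fun i _ => hper i
      _ = (m : ℝ) * finner D D
            - (2 * η - 2 * η ^ 2 * (1 + δ)) * ∑ i, finner D (w i) := by
          rw [Finset.sum_sub_distrib, Finset.sum_const, ← Finset.mul_sum]
          simp [mul_comm]
      _ ≤ (m : ℝ) * ((1 - 2 * (1 - δ) * (2 * η - 2 * η ^ 2 * (1 + δ))) * finner D D) := by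
          nlinarith [mul_le_mul_of_nonneg_left hsumw ht]
  have hCS : (∑ i, fnorm (D - η • P (w i))) ^ 2 ≤
      (m : ℝ) * ∑ i, fnorm (D - η • P (w i)) ^ 2 := by
    have h := sq_sum_le_card_mul_sum_sq (s := (Finset.univ : Finset (Fin m)))
      (f := fun i => fnorm (D - η • P (w i)))
    simpa using h
  have hrhs : Real.sqrt (1 - 2 * (1 - δ) * (2 * η - 2 * η ^ 2 * (1 + δ))) * fnorm D
      = Real.sqrt ((1 - 2 * (1 - δ) * (2 * η - 2 * η ^ 2 * (1 + δ))) * finner D D) := by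
    rw [fnorm, ← Real.sqrt_mul' _ (finner_self_nonneg D)]
  rw [hrhs]
  apply Real.le_sqrt_of_sq_le
  set S := ∑ i, fnorm (D - η • P (w i)) with hSdef
  set c := 1 - 2 * (1 - δ) * (2 * η - 2 * η ^ 2 * (1 + δ)) with hcdef
  have hS2 : S ^ 2 ≤ (m : ℝ) ^ 2 * (c * finner D D) := by
    calc S ^ 2 ≤ (m : ℝ) * ∑ i, fnorm (D - η • P (w i)) ^ 2 := hCS
      _ ≤ (m : ℝ) * ((m : ℝ) * (c * finner D D)) :=
          mul_le_mul_of_nonneg_left hQ hmR.le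
      _ = (m : ℝ) ^ 2 * (c * finner D D) := by ring
  calc (1 / (m : ℝ) * S) ^ 2 = S ^ 2 * (1 / (m : ℝ) ^ 2) := by ring
    _ ≤ (m : ℝ) ^ 2 * (c * finner D D) * (1 / (m : ℝ) ^ 2) := by
        apply mul_le_mul_of_nonneg_right hS2; positivity
    _ = c * finner D D := by field_simp
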